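/- If a1,...,an ∈ ℕ and an > 12·lcm(a1,...,a_{n-1}), then P(a1,...,an) > (1/3)·P(a1,...,a_{n-1}). -/

import Mathlib

open MeasureTheory Real Set


lemma aux_shift (k : ℤ) (c d : ℝ) :
    volume ({x : ℝ | 0 < Real.cos x} ∩ Ioc (c + 2*π*k) (d + 2*π*k)) =
    volume ({x : ℝ | 0 < Real.cos x} ∩ Ioc c d) := by
  have hpre : (fun x : ℝ => 2*π*k + x) ⁻¹'
      ({x : ℝ | 0 < Real.cos x} ∩ Ioc (c + 2*π*k) (d + 2*π*k))
      = {x : ℝ | 0 < Real.cos x} ∩ Ioc c d := by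
    ext x
    simp only [Set.mem_preimage, Set.mem_inter_iff, Set.mem_setOf_eq, Set.mem_Ioc]
    have hc : Real.cos (2*π*(k:ℝ) + x) = Real.cos x := by
      rw [show (2*π*(k:ℝ) + x) = x + (k:ℝ)*(2*π) by ring, Real.cos_add_int_mul_two_pi]
    rw [hc]
    constructor
    · rintro ⟨h1, h2, h3⟩; exact ⟨h1, by linarith, by linarith⟩
    · rintro ⟨h1, h2, h3⟩; exact ⟨h1, by linarith, by linarith⟩
  rw [← hpre, measure_preimage_add]

lemma aux_period (c : ℝ) :
    volume ({x : ℝ | 0 < Real.cos x} ∩ Ioc c (c + 2*π)) = ENNReal.ofReal π := by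
  have h2π : (0:ℝ) < 2*π := by positivity
  obtain ⟨k, hk1, hk2⟩ : ∃ k : ℤ, c ≤ -(π/2) + 2*π*k ∧ -(π/2) + 2*π*k ≤ c + 2*π := by
    refine ⟨⌈(c + π/2)/(2*π)⌉, ?_, ?_⟩
    · have h1 : (c + π/2)/(2*π) ≤ (⌈(c + π/2)/(2*π)⌉ : ℝ) := Int.le_ceil _
      have := (div_le_iff₀ h2π).mp h1
      linarith
    · have h1 : ((⌈(c + π/2)/(2*π)⌉ : ℤ) : ℝ) < (c + π/2)/(2*π) + 1 := Int.ceil_lt_add_one _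
      have h1' : ((⌈(c + π/2)/(2*π)⌉ : ℤ) : ℝ) - 1 < (c + π/2)/(2*π) := by linarith
      have := (lt_div_iff₀ h2π).mp h1'
      linarith
  set b : ℝ := -(π/2) + 2*π*(k:ℝ) with hb
  have hmeas : MeasurableSet {x : ℝ | 0 < Real.cos x} :=
    (isOpen_lt continuous_const Real.continuous_cos).measurableSet
  have split1 : volume ({x : ℝ | 0 < Real.cos x} ∩ Ioc c (c + 2*π)) =
      volume ({x : ℝ | 0 < Real.cos x} ∩ Ioc c b) +
      volume ({x : ℝ | 0 < Real.cos x} ∩ Ioc b (c + 2*π)) := by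
    rw [← measure_union (Set.disjoint_of_subset inter_subset_right inter_subset_right
        (Set.Ioc_disjoint_Ioc_of_le le_rfl)) (hmeas.inter measurableSet_Ioc),
      ← Set.inter_union_distrib_left, Set.Ioc_union_Ioc_eq_Ioc hk1 hk2]
  have tr1 : volume ({x : ℝ | 0 < Real.cos x} ∩ Ioc c b) =
      volume ({x : ℝ | 0 < Real.cos x} ∩ Ioc (c + 2*π) (b + 2*π)) := by
    have := aux_shift 1 c b
    rw [show 2*π*((1:ℤ):ℝ) = 2*π by push_cast; ring] at this
    exact this.symm
  have split2 : volume ({x : ℝ | 0 < Real.cos x} ∩ Ioc b (b + 2*π)) =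
      volume ({x : ℝ | 0 < Real.cos x} ∩ Ioc b (c + 2*π)) +
      volume ({x : ℝ | 0 < Real.cos x} ∩ Ioc (c + 2*π) (b + 2*π)) := by
    rw [← measure_union (Set.disjoint_of_subset inter_subset_right inter_subset_right
        (Set.Ioc_disjoint_Ioc_of_le le_rfl)) (hmeas.inter measurableSet_Ioc),
      ← Set.inter_union_distrib_left, Set.Ioc_union_Ioc_eq_Ioc hk2 (by linarith)]
  have key : volume ({x : ℝ | 0 < Real.cos x} ∩ Ioc c (c + 2*π)) =
      volume ({x : ℝ | 0 < Real.cos x} ∩ Ioc b (b + 2*π)) := by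
    rw [split1, tr1, split2, add_comm]
  rw [key]
  have tr2 : volume ({x : ℝ | 0 < Real.cos x} ∩ Ioc b (b + 2*π)) =
      volume ({x : ℝ | 0 < Real.cos x} ∩ Ioc (-(π/2)) (-(π/2) + 2*π)) := by
    have := aux_shift k (-(π/2)) (-(π/2) + 2*π)
    rw [show -(π/2) + 2*π + 2*π*(k:ℝ) = b + 2*π by rw [hb]; ring,
        show -(π/2) + 2*π*(k:ℝ) = b by rw [hb]] at this
    exact this
  rw [tr2]
  have hset : {x : ℝ | 0 < Real.cos x} ∩ Ioc (-(π/2)) (-(π/2) + 2*π) =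
      Ioo (-(π/2)) (π/2) := by
    ext x
    simp only [Set.mem_inter_iff, Set.mem_setOf_eq, Set.mem_Ioc, Set.mem_Ioo]
    constructor
    · rintro ⟨h1, h2, h3⟩
      refine ⟨h2, ?_⟩
      by_contra hge
      push_neg at hge
      have : Real.cos x ≤ 0 := Real.cos_nonpos_of_pi_div_two_le_of_le hge (by linarith)
      linarith
    · rintro ⟨h1, h2⟩
      have hπ := Real.pi_pos
      exact ⟨Real.cos_pos_of_mem_Ioo ⟨h1, h2⟩, h1, by linarith⟩
  rw [hset, Real.volume_Ioo]
  norm_num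

lemma aux_periods (c : ℝ) (k : ℕ) :
    volume ({x : ℝ | 0 < Real.cos x} ∩ Ioc c (c + 2*π*k)) = ENNReal.ofReal (π * k) := by
  induction k with
  | zero => simp
  | succ k ih =>
    have hπ := Real.pi_pos
    have hmeas : MeasurableSet {x : ℝ | 0 < Real.cos x} :=
      (isOpen_lt continuous_const Real.continuous_cos).measurableSet
    have hsplit : volume ({x : ℝ | 0 < Real.cos x} ∩ Ioc c (c + 2*π*(k+1:ℕ))) =
        volume ({x : ℝ | 0 < Real.cos x} ∩ Ioc c (c + 2*π*k)) +
        volume ({x : ℝ | 0 < Real.cos x} ∩ Ioc (c + 2*π*k) (c + 2*π*(k+1:ℕ))) := by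
      rw [← measure_union (Set.disjoint_of_subset inter_subset_right inter_subset_right
          (Set.Ioc_disjoint_Ioc_of_le le_rfl)) (hmeas.inter measurableSet_Ioc),
        ← Set.inter_union_distrib_left, Set.Ioc_union_Ioc_eq_Ioc (le_add_of_nonneg_right (by positivity)) (by push_cast; nlinarith)]
    rw [hsplit, ih]
    have h2 : volume ({x : ℝ | 0 < Real.cos x} ∩ Ioc (c + 2*π*k) (c + 2*π*(k+1:ℕ))) =
        ENNReal.ofReal π := by
      have := aux_period (c + 2*π*k)
      rw [show c + 2*π*k + 2*π = c + 2*π*(k+1:ℕ) by push_cast; ring] at this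
      exact this
    rw [h2, ← ENNReal.ofReal_add (by positivity) (by positivity)]
    congr 1
    push_cast
    ring

lemma aux_lb (c ℓ : ℝ) :
    ENNReal.ofReal (ℓ/2 - π) ≤ volume ({x : ℝ | 0 < Real.cos x} ∩ Ioc c (c + ℓ)) := by
  have hπ := Real.pi_pos
  rcases le_or_gt ℓ 0 with hneg | hℓ
  · have : ℓ/2 - π ≤ 0 := by linarith
    simp [ENNReal.ofReal_eq_zero.mpr this]
  · have h2π : (0:ℝ) < 2*π := by positivity
    set k : ℕ := ⌊ℓ/(2*π)⌋₊ with hk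
    have hk1 : (k:ℝ) ≤ ℓ/(2*π) := Nat.floor_le (by positivity)
    have hk2 : ℓ/(2*π) < k + 1 := Nat.lt_floor_add_one _
    have hkℓ : 2*π*k ≤ ℓ := by
      have := (le_div_iff₀ h2π).mp hk1
      linarith
    have hlow : ℓ/2 - π ≤ π * k := by
      have := (div_lt_iff₀ h2π).mp hk2
      nlinarith
    calc ENNReal.ofReal (ℓ/2 - π) ≤ ENNReal.ofReal (π * k) := ENNReal.ofReal_le_ofReal hlow
    _ = volume ({x : ℝ | 0 < Real.cos x} ∩ Ioc c (c + 2*π*k)) := (aux_periods c k).symm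
    _ ≤ _ := measure_mono (Set.inter_subset_inter_right _ (Set.Ioc_subset_Ioc le_rfl (by linarith)))

lemma aux_lb_neg (c ℓ : ℝ) :
    ENNReal.ofReal (ℓ/2 - π) ≤ volume ({x : ℝ | Real.cos x < 0} ∩ Ioc c (c + ℓ)) := by
  have hpre : (fun x : ℝ => π + x) ⁻¹'
      ({x : ℝ | 0 < Real.cos x} ∩ Ioc (c + π) (c + π + ℓ))
      = {x : ℝ | Real.cos x < 0} ∩ Ioc c (c + ℓ) := by
    ext x
    simp only [Set.mem_preimage, Set.mem_inter_iff, Set.mem_setOf_eq, Set.mem_Ioc]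
    have hc : Real.cos (π + x) = -Real.cos x := by
      rw [add_comm, Real.cos_add_pi]
    rw [hc]
    constructor
    · rintro ⟨h1, h2, h3⟩; exact ⟨by linarith, by linarith, by linarith⟩
    · rintro ⟨h1, h2, h3⟩; exact ⟨by linarith, by linarith, by linarith⟩
  calc ENNReal.ofReal (ℓ/2 - π)
      ≤ volume ({x : ℝ | 0 < Real.cos x} ∩ Ioc (c + π) (c + π + ℓ)) := aux_lb (c + π) ℓ
  _ = _ := by rw [← hpre, measure_preimage_add]

lemma aux_scale {N : ℝ} (hN : 0 < N) (s d : ℝ) (S : Set ℝ)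
    (hlb : ENNReal.ofReal (N*d/2 - π) ≤ volume (S ∩ Ioc (N*s) (N*s + N*d))) :
    ENNReal.ofReal (d/2 - π/N) ≤ volume {x : ℝ | x ∈ Ioo s (s + d) ∧ N * x ∈ S} := by
  have hN' : N ≠ 0 := ne_of_gt hN
  have key : {x : ℝ | x ∈ Ioc s (s + d) ∧ N * x ∈ S}
      = (fun x : ℝ => N * x) ⁻¹' (S ∩ Ioc (N*s) (N*s + N*d)) := by
    ext x
    simp only [Set.mem_setOf_eq, Set.mem_preimage, Set.mem_inter_iff, Set.mem_Ioc]
    constructor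
    · rintro ⟨⟨h1, h2⟩, h3⟩
      exact ⟨h3, by nlinarith, by nlinarith⟩
    · rintro ⟨h3, h1, h2⟩
      refine ⟨⟨?_, ?_⟩, h3⟩
      · exact lt_of_mul_lt_mul_left h1 hN.le
      · nlinarith
  have hIoc : ENNReal.ofReal (d/2 - π/N) ≤ volume {x : ℝ | x ∈ Ioc s (s + d) ∧ N * x ∈ S} := by
    rw [key, Real.volume_preimage_mul_left hN']
    have heq : ENNReal.ofReal (d/2 - π/N) = ENNReal.ofReal |N⁻¹| * ENNReal.ofReal (N*d/2 - π) := by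
      rw [← ENNReal.ofReal_mul (abs_nonneg _), abs_of_pos (by positivity)]
      congr 1
      field_simp
    rw [heq]
    exact mul_le_mul_right hlb _
  refine le_trans hIoc ?_
  have hsub : {x : ℝ | x ∈ Ioc s (s + d) ∧ N * x ∈ S}
      ⊆ {x : ℝ | x ∈ Ioo s (s + d) ∧ N * x ∈ S} ∪ {s + d} := by
    rintro x ⟨⟨h1, h2⟩, h3⟩
    rcases lt_or_eq_of_le h2 with h2' | h2'
    · exact Or.inl ⟨⟨h1, h2'⟩, h3⟩
    · exact Or.inr h2'
  calc volume {x : ℝ | x ∈ Ioc s (s + d) ∧ N * x ∈ S}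
      ≤ volume ({x : ℝ | x ∈ Ioo s (s + d) ∧ N * x ∈ S} ∪ {s + d}) := measure_mono hsub
  _ ≤ volume {x : ℝ | x ∈ Ioo s (s + d) ∧ N * x ∈ S} + volume ({s + d} : Set ℝ) :=
      measure_union_le _ _
  _ = volume {x : ℝ | x ∈ Ioo s (s + d) ∧ N * x ∈ S} := by
      rw [Real.volume_singleton, add_zero]

lemma aux_cell_pos {N : ℝ} (hN : 0 < N) (s d : ℝ) :
    ENNReal.ofReal (d/2 - π/N) ≤ volume {x : ℝ | x ∈ Ioo s (s + d) ∧ 0 < Real.cos (N * x)} := by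
  have := aux_scale hN s d {x : ℝ | 0 < Real.cos x} (aux_lb (N*s) (N*d))
  simpa using this

lemma aux_cell_neg {N : ℝ} (hN : 0 < N) (s d : ℝ) :
    ENNReal.ofReal (d/2 - π/N) ≤ volume {x : ℝ | x ∈ Ioo s (s + d) ∧ Real.cos (N * x) < 0} := by
  have := aux_scale hN s d {x : ℝ | Real.cos x < 0} (aux_lb_neg (N*s) (N*d))
  simpa using this

lemma aux_zero {ai L : ℕ} (hai : 0 < ai) (hdvd : ai ∣ L) (hL : 0 < L) {x : ℝ}
    (hx : Real.cos (ai * x) = 0) : ∃ c : ℤ, x = c * (π / (2 * L)) := by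
  obtain ⟨j, hj⟩ := Real.cos_eq_zero_iff.mp hx
  obtain ⟨e, he⟩ := hdvd
  refine ⟨(2*j+1) * e, ?_⟩
  have hepos : 0 < e := by
    rcases Nat.eq_zero_or_pos e with h0 | h; · simp [h0] at he; omega
    · exact h
  have hai' : (ai:ℝ) ≠ 0 := Nat.cast_ne_zero.mpr hai.ne'
  have he' : (e:ℝ) ≠ 0 := Nat.cast_ne_zero.mpr hepos.ne'
  have heR : (L:ℝ) = (ai:ℝ) * (e:ℝ) := by exact_mod_cast congrArg (Nat.cast (R := ℝ)) he
  field_simp at hj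
  rw [heR]
  push_cast
  field_simp
  linear_combination hj

/-- no zero of `cos (ai ·)` in the open cell -/
lemma aux_nz_cell {ai L : ℕ} (hai : 0 < ai) (hdvd : ai ∣ L) (hL : 0 < L) {x : ℝ} (k : ℕ)
    (hx : x ∈ Ioo ((k:ℝ) * (π / (2*L))) (((k:ℝ)+1) * (π / (2*L)))) :
    Real.cos (ai * x) ≠ 0 := by
  intro h0
  obtain ⟨c, hc⟩ := aux_zero hai hdvd hL h0
  have hδ : (0:ℝ) < π / (2*L) := by
    have := Real.pi_pos
    have hL' : (0:ℝ) < L := Nat.cast_pos.mpr hL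
    positivity
  obtain ⟨h1, h2⟩ := hx
  rw [hc] at h1 h2
  have hk1 : (k:ℝ) < c := lt_of_mul_lt_mul_right h1 hδ.le
  have hk2 : (c:ℝ) < (k:ℝ)+1 := lt_of_mul_lt_mul_right h2 hδ.le
  have hk1' : (k:ℤ) < c := by exact_mod_cast hk1
  have hk2' : c < (k:ℤ) + 1 := by exact_mod_cast hk2
  omega

/-- no zero of `cos (ai ·)` at the midpoint of a cell -/
lemma aux_nz_mid {ai L : ℕ} (hai : 0 < ai) (hdvd : ai ∣ L) (hL : 0 < L) (k : ℕ) :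
    Real.cos (ai * ((2*(k:ℝ)+1) * (π / (2*L)) / 2)) ≠ 0 := by
  intro h0
  obtain ⟨c, hc⟩ := aux_zero hai hdvd hL h0
  have hδ : (0:ℝ) < π / (2*L) := by
    have := Real.pi_pos
    have hL' : (0:ℝ) < L := Nat.cast_pos.mpr hL
    positivity
  have : (2*(k:ℝ)+1) = 2*(c:ℝ) := by
    have := hc
    field_simp at this
    nlinarith [hδ]
  have : (2*(k:ℤ)+1) = 2*c := by exact_mod_cast this
  omega

/-- sign constancy on a cell -/
lemma aux_sign {ai L : ℕ} (hai : 0 < ai) (hdvd : ai ∣ L) (hL : 0 < L) {x y : ℝ} (k : ℕ)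
    (hx : x ∈ Ioo ((k:ℝ) * (π / (2*L))) (((k:ℝ)+1) * (π / (2*L))))
    (hy : y ∈ Ioo ((k:ℝ) * (π / (2*L))) (((k:ℝ)+1) * (π / (2*L))))
    (hcx : Real.cos (ai * x) < 0) (hcy : 0 < Real.cos (ai * y)) : False := by
  have hcont : ContinuousOn (fun t : ℝ => Real.cos (ai * t)) (uIcc x y) :=
    (Real.continuous_cos.comp (continuous_const.mul continuous_id)).continuousOn
  have h0 : (0:ℝ) ∈ uIcc (Real.cos (ai * x)) (Real.cos (ai * y)) :=
    Set.mem_uIcc.mpr (Or.inl ⟨hcx.le, hcy.le⟩)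
  obtain ⟨z, hz, hz0⟩ := intermediate_value_uIcc hcont h0
  have hzI : z ∈ Ioo ((k:ℝ) * (π / (2*L))) (((k:ℝ)+1) * (π / (2*L))) :=
    (Set.ordConnected_Ioo.uIcc_subset hx hy) hz
  exact aux_nz_cell hai hdvd hL k hzI hz0

/-- The cosine sign correlation: the normalized measure of the set of `x ∈ [0, 2π]`
where all `cos (aᵢ x)` are positive or all are negative. -/
noncomputable def cosP (n : ℕ) (a : Fin n → ℕ) : ℝ :=
  (volume {x : ℝ | x ∈ Icc 0 (2 * π) ∧
    ((∀ i, 0 < Real.cos (a i * x)) ∨ (∀ i, Real.cos (a i * x) < 0))}).toReal / (2 * π)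

set_option maxHeartbeats 2000000 in
theorem stmt_9 (n : ℕ) (a : Fin (n + 1) → ℕ) (hpos : ∀ i, 0 < a i)
    (h : a (Fin.last n) > 12 * Finset.univ.lcm (a ∘ Fin.castSucc)) :
    cosP (n + 1) a > (1 / 3) * cosP n (a ∘ Fin.castSucc) := by
  classical
  have hπ := Real.pi_pos
  set L : ℕ := Finset.univ.lcm (a ∘ Fin.castSucc) with hLdef
  have hL : 0 < L := by
    rcases Nat.eq_zero_or_pos L with h0 | hp
    · exfalso
      obtain ⟨i, -, hi⟩ := Finset.lcm_eq_zero_iff.mp h0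
      exact absurd hi ((hpos _).ne')
    · exact hp
  have hdvd : ∀ i : Fin n, a i.castSucc ∣ L := fun i =>
    Finset.dvd_lcm (Finset.mem_univ i)
  have hN : 12 * L < a (Fin.last n) := h
  have hNpos : 0 < a (Fin.last n) := hpos _
  have hLR : (0:ℝ) < L := Nat.cast_pos.mpr hL
  have hNR : (0:ℝ) < a (Fin.last n) := by exact_mod_cast hNpos
  have hNR12 : 12 * (L:ℝ) < a (Fin.last n) := by exact_mod_cast hN
  set δ : ℝ := π / (2*L) with hδdef
  have hδ : 0 < δ := by rw [hδdef]; positivity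
  have hmmem : ∀ k : ℕ, (2*(k:ℝ)+1) * δ / 2 ∈ Ioo ((k:ℝ)*δ) (((k:ℝ)+1)*δ) := by
    intro k
    constructor <;> nlinarith [hδ]
  -- sign transfer
  have cellpos : ∀ (k : ℕ) (i : Fin n),
      0 < Real.cos (a i.castSucc * ((2*(k:ℝ)+1) * δ / 2)) →
      ∀ x ∈ Ioo ((k:ℝ)*δ) (((k:ℝ)+1)*δ), 0 < Real.cos (a i.castSucc * x) := by
    intro k i hm x hx
    rcases lt_trichotomy (Real.cos (a i.castSucc * x)) 0 with h1 | h1 | h1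
    · exact (aux_sign (hpos _) (hdvd i) hL k hx (hmmem k) h1 hm).elim
    · exact absurd h1 (aux_nz_cell (hpos _) (hdvd i) hL k hx)
    · exact h1
  have cellneg : ∀ (k : ℕ) (i : Fin n),
      Real.cos (a i.castSucc * ((2*(k:ℝ)+1) * δ / 2)) < 0 →
      ∀ x ∈ Ioo ((k:ℝ)*δ) (((k:ℝ)+1)*δ), Real.cos (a i.castSucc * x) < 0 := by
    intro k i hm x hx
    rcases lt_trichotomy (Real.cos (a i.castSucc * x)) 0 with h1 | h1 | h1
    · exact h1
    · exact absurd h1 (aux_nz_cell (hpos _) (hdvd i) hL k hx)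
    · exact (aux_sign (hpos _) (hdvd i) hL k (hmmem k) hx hm h1).elim
  -- reverse transfer: from a point of the cell to the midpoint
  have midpos : ∀ (k : ℕ) (i : Fin n) (x : ℝ), x ∈ Ioo ((k:ℝ)*δ) (((k:ℝ)+1)*δ) →
      0 < Real.cos (a i.castSucc * x) →
      0 < Real.cos (a i.castSucc * ((2*(k:ℝ)+1) * δ / 2)) := by
    intro k i x hx hcx
    rcases lt_trichotomy (Real.cos (a i.castSucc * ((2*(k:ℝ)+1) * δ / 2))) 0 with h1 | h1 | h1
    · exact (aux_sign (hpos _) (hdvd i) hL k (hmmem k) hx h1 hcx).elim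
    · exact absurd h1 (aux_nz_mid (hpos _) (hdvd i) hL k)
    · exact h1
  have midneg : ∀ (k : ℕ) (i : Fin n) (x : ℝ), x ∈ Ioo ((k:ℝ)*δ) (((k:ℝ)+1)*δ) →
      Real.cos (a i.castSucc * x) < 0 →
      Real.cos (a i.castSucc * ((2*(k:ℝ)+1) * δ / 2)) < 0 := by
    intro k i x hx hcx
    rcases lt_trichotomy (Real.cos (a i.castSucc * ((2*(k:ℝ)+1) * δ / 2))) 0 with h1 | h1 | h1
    · exact h1
    · exact absurd h1 (aux_nz_mid (hpos _) (hdvd i) hL k)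
    · exact (aux_sign (hpos _) (hdvd i) hL k hx (hmmem k) hcx h1).elim
  set P : ℕ → Prop := fun k => ∀ i : Fin n,
    0 < Real.cos (a i.castSucc * ((2*(k:ℝ)+1) * δ / 2)) with hPdef
  set Q : ℕ → Prop := fun k => ∀ i : Fin n,
    Real.cos (a i.castSucc * ((2*(k:ℝ)+1) * δ / 2)) < 0 with hQdef
  set good : Finset ℕ := (Finset.range (4*L)).filter (fun k => P k ∨ Q k) with hgood
  have h4L : 4*(L:ℝ)*δ = 2*π := by
    rw [hδdef]; field_simp; ring
  -- E upper bound
  have hEsub : {x : ℝ | x ∈ Icc 0 (2*π) ∧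
      ((∀ i : Fin n, 0 < Real.cos (a i.castSucc * x)) ∨
       (∀ i : Fin n, Real.cos (a i.castSucc * x) < 0))} ⊆
      ((fun k : ℕ => (k:ℝ)*δ) '' {k | k ≤ 4*L}) ∪
      ⋃ k ∈ Finset.range (4*L), ({x : ℝ | x ∈ Icc 0 (2*π) ∧
        ((∀ i : Fin n, 0 < Real.cos (a i.castSucc * x)) ∨
         (∀ i : Fin n, Real.cos (a i.castSucc * x) < 0))} ∩
        Ioo ((k:ℝ)*δ) (((k:ℝ)+1)*δ)) := by
    intro x hx
    have hx0 : 0 ≤ x := hx.1.1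
    have hx2 : x ≤ 4*L*δ := by linarith [hx.1.2]
    by_cases hg : ∃ j : ℕ, j ≤ 4*L ∧ x = (j:ℝ)*δ
    · obtain ⟨j, hj1, hj2⟩ := hg
      exact Or.inl ⟨j, hj1, hj2.symm⟩
    · push_neg at hg
      right
      set k : ℕ := ⌊x/δ⌋₊ with hk
      have hk1 : (k:ℝ) ≤ x/δ := Nat.floor_le (by positivity)
      have hk2 : x/δ < k+1 := Nat.lt_floor_add_one _
      have hkx : (k:ℝ)*δ ≤ x := by
        have := (le_div_iff₀ hδ).mp hk1; linarith
      have hxk1 : x < ((k:ℝ)+1)*δ := by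
        have := (div_lt_iff₀ hδ).mp hk2; linarith
      have hkub : k ≤ 4*L := by
        have h1 : (k:ℝ) ≤ 4*L := by nlinarith
        exact_mod_cast h1
      have hne : x ≠ (k:ℝ)*δ := hg k hkub
      have hkstrict : (k:ℝ)*δ < x := lt_of_le_of_ne hkx (Ne.symm hne)
      have hklt : k < 4*L := by
        have hne2 : x ≠ ((4*L : ℕ):ℝ)*δ := hg (4*L) le_rfl
        have hlt : x < 4*(L:ℝ)*δ := lt_of_le_of_ne hx2 (by push_cast at hne2; intro hc; exact hne2 (by linarith))
        have h1 : (k:ℝ) < 4*L := by nlinarith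
        exact_mod_cast h1
      exact Set.mem_iUnion₂.mpr ⟨k, Finset.mem_range.mpr hklt, hx, hkstrict, hxk1⟩
  have hEvol : volume {x : ℝ | x ∈ Icc 0 (2*π) ∧
      ((∀ i : Fin n, 0 < Real.cos (a i.castSucc * x)) ∨
       (∀ i : Fin n, Real.cos (a i.castSucc * x) < 0))} ≤
      (good.card : ENNReal) * ENNReal.ofReal δ := by
    have hgrid : volume ((fun k : ℕ => (k:ℝ)*δ) '' {k | k ≤ 4*L}) = 0 :=
      ((Set.to_countable _).image _).measure_zero _
    calc volume {x : ℝ | x ∈ Icc 0 (2*π) ∧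
        ((∀ i : Fin n, 0 < Real.cos (a i.castSucc * x)) ∨
         (∀ i : Fin n, Real.cos (a i.castSucc * x) < 0))}
        ≤ volume (((fun k : ℕ => (k:ℝ)*δ) '' {k | k ≤ 4*L}) ∪
          ⋃ k ∈ Finset.range (4*L), ({x : ℝ | x ∈ Icc 0 (2*π) ∧
            ((∀ i : Fin n, 0 < Real.cos (a i.castSucc * x)) ∨
             (∀ i : Fin n, Real.cos (a i.castSucc * x) < 0))} ∩
            Ioo ((k:ℝ)*δ) (((k:ℝ)+1)*δ))) := measure_mono hEsub
      _ ≤ volume ((fun k : ℕ => (k:ℝ)*δ) '' {k | k ≤ 4*L}) +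
          volume (⋃ k ∈ Finset.range (4*L), ({x : ℝ | x ∈ Icc 0 (2*π) ∧
            ((∀ i : Fin n, 0 < Real.cos (a i.castSucc * x)) ∨
             (∀ i : Fin n, Real.cos (a i.castSucc * x) < 0))} ∩
            Ioo ((k:ℝ)*δ) (((k:ℝ)+1)*δ))) := measure_union_le _ _
      _ = volume (⋃ k ∈ Finset.range (4*L), ({x : ℝ | x ∈ Icc 0 (2*π) ∧
            ((∀ i : Fin n, 0 < Real.cos (a i.castSucc * x)) ∨
             (∀ i : Fin n, Real.cos (a i.castSucc * x) < 0))} ∩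
            Ioo ((k:ℝ)*δ) (((k:ℝ)+1)*δ))) := by rw [hgrid, zero_add]
      _ ≤ ∑ k ∈ Finset.range (4*L), volume ({x : ℝ | x ∈ Icc 0 (2*π) ∧
            ((∀ i : Fin n, 0 < Real.cos (a i.castSucc * x)) ∨
             (∀ i : Fin n, Real.cos (a i.castSucc * x) < 0))} ∩
            Ioo ((k:ℝ)*δ) (((k:ℝ)+1)*δ)) := measure_biUnion_finset_le _ _
      _ ≤ ∑ k ∈ Finset.range (4*L), (if k ∈ good then ENNReal.ofReal δ else 0) := by
          apply Finset.sum_le_sum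
          intro k hkr
          by_cases hkg : k ∈ good
          · rw [if_pos hkg]
            calc volume _ ≤ volume (Ioo ((k:ℝ)*δ) (((k:ℝ)+1)*δ)) :=
                  measure_mono inter_subset_right
              _ = ENNReal.ofReal δ := by rw [Real.volume_Ioo]; congr 1; ring
          · rw [if_neg hkg]
            have hempty : {x : ℝ | x ∈ Icc 0 (2*π) ∧
                ((∀ i : Fin n, 0 < Real.cos (a i.castSucc * x)) ∨
                 (∀ i : Fin n, Real.cos (a i.castSucc * x) < 0))} ∩
                Ioo ((k:ℝ)*δ) (((k:ℝ)+1)*δ) = ∅ := by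
              rw [Set.eq_empty_iff_forall_notMem]
              rintro x ⟨⟨-, hsig⟩, hxI⟩
              apply hkg
              rw [hgood, Finset.mem_filter]
              refine ⟨hkr, ?_⟩
              rcases hsig with hall | hall
              · exact Or.inl (fun i => midpos k i x hxI (hall i))
              · exact Or.inr (fun i => midneg k i x hxI (hall i))
            rw [hempty]
            simp
      _ = (good.card : ENNReal) * ENNReal.ofReal δ := by
          rw [Finset.sum_ite_mem,
            Finset.inter_eq_right.mpr (by rw [hgood]; exact Finset.filter_subset _ _),
            Finset.sum_const, nsmul_eq_mul]
  -- the good pieces for the (n+1)-set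
  set R : ℕ → Set ℝ := fun k => Ioo ((k:ℝ)*δ) (((k:ℝ)+1)*δ) ∩
    {x : ℝ | if P k then 0 < Real.cos ((a (Fin.last n) : ℝ) * x)
             else Real.cos ((a (Fin.last n) : ℝ) * x) < 0} with hRdef
  have hRmeas : ∀ k, MeasurableSet (R k) := by
    intro k
    rw [hRdef]
    by_cases hp : P k
    · simp only [if_pos hp]
      exact measurableSet_Ioo.inter
        (isOpen_lt continuous_const (Real.continuous_cos.comp
          (continuous_const.mul continuous_id))).measurableSet
    · simp only [if_neg hp]
      exact measurableSet_Ioo.inter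
        (isOpen_lt (Real.continuous_cos.comp
          (continuous_const.mul continuous_id)) continuous_const).measurableSet
  have hRdisj : (↑good : Set ℕ).PairwiseDisjoint R := by
    have key : ∀ k l : ℕ, k < l → Disjoint (R k) (R l) := by
      intro k l hkl
      rw [Set.disjoint_left]
      rintro x hxk hxl
      have h1 : x < ((k:ℝ)+1)*δ := hxk.1.2
      have h2 : ((l:ℝ))*δ < x := hxl.1.1
      have h3 : ((k:ℝ)+1) ≤ l := by exact_mod_cast hkl
      nlinarith
    intro k _ l _ hkl
    rcases lt_or_gt_of_ne hkl with hlt | hlt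
    · exact key k l hlt
    · exact (key l k hlt).symm
  have hRsub : ∀ k ∈ good, R k ⊆ {x : ℝ | x ∈ Icc 0 (2*π) ∧
      ((∀ i : Fin (n+1), 0 < Real.cos (a i * x)) ∨
       (∀ i : Fin (n+1), Real.cos (a i * x) < 0))} := by
    intro k hkg x hxR
    obtain ⟨hxI, hxc⟩ := hxR
    have hkr : k < 4*L := Finset.mem_range.mp (Finset.mem_filter.mp hkg).1
    have hk4 : ((k:ℝ)+1) ≤ 4*L := by exact_mod_cast hkr
    have hxIcc : x ∈ Icc 0 (2*π) := by
      constructor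
      · have : (0:ℝ) ≤ (k:ℝ)*δ := by positivity
        linarith [hxI.1]
      · nlinarith [hxI.2]
    refine ⟨hxIcc, ?_⟩
    by_cases hp : P k
    · left
      intro i
      refine Fin.lastCases ?_ ?_ i
      · have := hxc
        rw [Set.mem_setOf_eq, if_pos hp] at this
        exact this
      · intro j
        exact cellpos k j (hp j) x hxI
    · have hq : Q k := ((Finset.mem_filter.mp hkg).2).resolve_left hp
      right
      intro i
      refine Fin.lastCases ?_ ?_ i
      · have := hxc
        rw [Set.mem_setOf_eq, if_neg hp] at this
        exact this
      · intro j
        exact cellneg k j (hq j) x hxI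
  have hRlb : ∀ k, ENNReal.ofReal (δ/2 - π/(a (Fin.last n) : ℝ)) ≤ volume (R k) := by
    intro k
    have hplus : ((k:ℝ)+1)*δ = (k:ℝ)*δ + δ := by ring
    by_cases hp : P k
    · have := aux_cell_pos hNR ((k:ℝ)*δ) δ
      refine le_trans this (le_of_eq ?_)
      congr 1
      ext x
      simp only [Set.mem_setOf_eq, hRdef, Set.mem_inter_iff, if_pos hp, hplus]
    · have := aux_cell_neg hNR ((k:ℝ)*δ) δ
      refine le_trans this (le_of_eq ?_)
      congr 1
      ext x
      simp only [Set.mem_setOf_eq, hRdef, Set.mem_inter_iff, if_neg hp, hplus]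
  have hTvol : (good.card : ENNReal) * ENNReal.ofReal (δ/2 - π/(a (Fin.last n) : ℝ)) ≤
      volume {x : ℝ | x ∈ Icc 0 (2*π) ∧
      ((∀ i : Fin (n+1), 0 < Real.cos (a i * x)) ∨
       (∀ i : Fin (n+1), Real.cos (a i * x) < 0))} := by
    calc (good.card : ENNReal) * ENNReal.ofReal (δ/2 - π/(a (Fin.last n) : ℝ))
        = ∑ k ∈ good, ENNReal.ofReal (δ/2 - π/(a (Fin.last n) : ℝ)) := by
          rw [Finset.sum_const, nsmul_eq_mul]
      _ ≤ ∑ k ∈ good, volume (R k) := Finset.sum_le_sum (fun k _ => hRlb k)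
      _ = volume (⋃ k ∈ good, R k) :=
          (measure_biUnion_finset hRdisj (fun k _ => hRmeas k)).symm
      _ ≤ _ := measure_mono (Set.iUnion₂_subset hRsub)
  -- 0 is a good cell
  have h0good : (0:ℕ) ∈ good := by
    rw [hgood, Finset.mem_filter]
    refine ⟨Finset.mem_range.mpr (by omega), Or.inl ?_⟩
    intro i
    apply Real.cos_pos_of_mem_Ioo
    have hai : (a i.castSucc : ℝ) ≤ L := Nat.cast_le.mpr (Nat.le_of_dvd hL (hdvd i))
    have haipos : (0:ℝ) ≤ a i.castSucc := Nat.cast_nonneg _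
    have hval : (a i.castSucc : ℝ) * ((2*((0:ℕ):ℝ)+1) * δ / 2) = (a i.castSucc : ℝ) * δ / 2 := by
      push_cast; ring
    rw [hval]
    constructor
    · nlinarith
    · have h1 : (a i.castSucc : ℝ) * δ ≤ (L:ℝ) * δ := mul_le_mul_of_nonneg_right hai hδ.le
      have h2 : (L:ℝ) * δ = π/2 := by rw [hδdef]; field_simp
      nlinarith
  -- numeric conclusion
  have hTfin : volume {x : ℝ | x ∈ Icc 0 (2*π) ∧
      ((∀ i : Fin (n+1), 0 < Real.cos (a i * x)) ∨
       (∀ i : Fin (n+1), Real.cos (a i * x) < 0))} ≠ ⊤ := by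
    have hle : volume {x : ℝ | x ∈ Icc 0 (2*π) ∧
        ((∀ i : Fin (n+1), 0 < Real.cos (a i * x)) ∨
         (∀ i : Fin (n+1), Real.cos (a i * x) < 0))} ≤ volume (Icc (0:ℝ) (2*π)) :=
      measure_mono (fun x hx => hx.1)
    rw [Real.volume_Icc] at hle
    exact ne_top_of_le_ne_top ENNReal.ofReal_ne_top hle
  have hπN : π/(a (Fin.last n) : ℝ) < δ/6 := by
    have heq : δ/6 = π/(12*(L:ℝ)) := by rw [hδdef]; ring
    rw [heq]
    exact div_lt_div_of_pos_left hπ (by positivity) hNR12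
  have hd2 : 0 ≤ δ/2 - π/(a (Fin.last n) : ℝ) := by nlinarith
  have hTreal : (good.card : ℝ) * (δ/2 - π/(a (Fin.last n) : ℝ)) ≤
      (volume {x : ℝ | x ∈ Icc 0 (2*π) ∧
      ((∀ i : Fin (n+1), 0 < Real.cos (a i * x)) ∨
       (∀ i : Fin (n+1), Real.cos (a i * x) < 0))}).toReal := by
    have := ENNReal.toReal_mono hTfin hTvol
    rwa [ENNReal.toReal_mul, ENNReal.toReal_natCast, ENNReal.toReal_ofReal hd2] at this
  have hEreal : (volume {x : ℝ | x ∈ Icc 0 (2*π) ∧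
      ((∀ i : Fin n, 0 < Real.cos (a i.castSucc * x)) ∨
       (∀ i : Fin n, Real.cos (a i.castSucc * x) < 0))}).toReal ≤ (good.card : ℝ) * δ := by
    have hne : (good.card : ENNReal) * ENNReal.ofReal δ ≠ ⊤ :=
      ENNReal.mul_ne_top (ENNReal.natCast_ne_top _) ENNReal.ofReal_ne_top
    have := ENNReal.toReal_mono hne hEvol
    rwa [ENNReal.toReal_mul, ENNReal.toReal_natCast, ENNReal.toReal_ofReal hδ.le] at this
  set TT : ℝ := (volume {x : ℝ | x ∈ Icc 0 (2*π) ∧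
      ((∀ i : Fin (n+1), 0 < Real.cos (a i * x)) ∨
       (∀ i : Fin (n+1), Real.cos (a i * x) < 0))}).toReal with hTTdef
  set ET : ℝ := (volume {x : ℝ | x ∈ Icc 0 (2*π) ∧
      ((∀ i : Fin n, 0 < Real.cos (a i.castSucc * x)) ∨
       (∀ i : Fin n, Real.cos (a i.castSucc * x) < 0))}).toReal with hETdef
  have hGpos : 0 < good.card := Finset.card_pos.mpr ⟨0, h0good⟩
  have hGR : (1:ℝ) ≤ good.card := by exact_mod_cast hGpos
  clear_value TT ET
  clear hEsub hEvol hTvol hRlb hRsub hRdisj hRmeas hTfin cellpos cellneg midpos midneg hmmem h0good h4L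
  clear hRdef R
  clear_value good
  clear hgood hPdef hQdef P Q hLdef hdvd
  have hfinal : 1/3 * (ET / (2*π)) < TT / (2*π) := by
    rw [show (1:ℝ)/3 * (ET/(2*π)) = (1/3*ET)/(2*π) from by ring,
      div_lt_div_iff_of_pos_right (by positivity : (0:ℝ) < 2*π)]
    have hgap : (0:ℝ) < δ/6 - π/(a (Fin.last n) : ℝ) := by linarith
    have hGpos' : (0:ℝ) < good.card := by exact_mod_cast hGpos
    nlinarith [mul_pos hGpos' hgap, hTreal, hEreal]
  simp only [cosP, Function.comp_apply]
  rw [← hTTdef, ← hETdef]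
  exact hfinal
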